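/- Let F : 𝔽₂^{n₁} × 𝔽₂^{n₂} → 𝔽₂^{n₁+n₂} be a decomposable Boolean network, F(x,y) = (F₁(x), H(x,y)), and let C = {(c,d₁), …, (c,d_r)} be an attractor of F, where {c} is a steady state of F₁ and C₂ = {d₁,…,d_r} is an attractor of the downstream network F₂^c : y ↦ H(c,y). Suppose G₁ : 𝔽₂^{n₁} → 𝔽₂^{n₁} (the upstream network after applying a control μ₁) has unique attractor {c}, and H' : 𝔽₂^{n₁} × 𝔽₂^{n₂} → 𝔽₂^{n₂} (the downstream update after applying a control μ₂) is such that y ↦ H'(c,y) has unique attractor C₂. Then the controlled network F^μ(x,y) := (G₁(x), H'(x,y)) has C as its unique attractor; that is, the combined control μ = (μ₁, μ₂) stabilizes F in its existing attractor C. -/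

import Mathlib

/-- An attractor of a Boolean network `F : α → α` is a minimal nonempty subset `C`
with `F(C) = C`. -/
def IsAttractor {α : Type*} (F : α → α) (C : Set α) : Prop :=
  C.Nonempty ∧ F '' C = C ∧ ∀ D ⊆ C, D.Nonempty → F '' D = D → D = C


lemma iter_mul_period {α : Type*} (F : α → α) (z : α) (p : ℕ) (hz : F^[p] z = z) (t : ℕ) :
    F^[t * p] z = z := by
  induction t with
  | zero => simp
  | succ n ih => rw [Nat.succ_mul, Function.iterate_add_apply, hz, ih]

lemma orbit_attractor {α : Type*} (F : α → α) (z : α) (p : ℕ) (hp : 0 < p)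
    (hz : F^[p] z = z) : IsAttractor F (Set.range fun k : ℕ => F^[k] z) := by
  refine ⟨⟨z, 0, rfl⟩, ?_, ?_⟩
  · ext w
    constructor
    · rintro ⟨_, ⟨k, rfl⟩, rfl⟩
      exact ⟨k + 1, by simp only []; rw [Function.iterate_succ_apply']⟩
    · rintro ⟨k, rfl⟩
      refine ⟨F^[k + p - 1] z, ⟨_, rfl⟩, ?_⟩
      show F (F^[k + p - 1] z) = F^[k] z
      calc F (F^[k + p - 1] z) = F^[k + p - 1 + 1] z :=
            (Function.iterate_succ_apply' F (k + p - 1) z).symm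
        _ = F^[k + p] z := by rw [show k + p - 1 + 1 = k + p by omega]
        _ = F^[k] z := by rw [Function.iterate_add_apply, hz]
  · rintro S hS ⟨s, hs⟩ hSinv
    obtain ⟨k, rfl⟩ := hS hs
    refine Set.Subset.antisymm hS ?_
    rintro w ⟨m, rfl⟩
    show F^[m] z ∈ S
    have hkp : k ≤ k * p := Nat.le_mul_of_pos_right k hp
    have hforward : ∀ j, F^[j] (F^[k] z) ∈ S := by
      intro j
      induction j with
      | zero => simpa using hs
      | succ n ih =>
        rw [Function.iterate_succ_apply', ← hSinv]
        exact ⟨_, ih, rfl⟩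
    have h2 := hforward (m + k * p - k)
    rwa [← Function.iterate_add_apply, show m + k * p - k + k = m + k * p by omega,
      Function.iterate_add_apply, iter_mul_period F z p hz k] at h2

lemma attractor_eq_orbit {α : Type*} [Finite α] (F : α → α) (D : Set α)
    (hD : IsAttractor F D) :
    ∃ z p, 0 < p ∧ F^[p] z = z ∧ z ∈ D ∧ D = Set.range fun k : ℕ => F^[k] z := by
  obtain ⟨⟨z₀, hz₀⟩, hinv, hmin⟩ := hD
  have hforward : ∀ k, F^[k] z₀ ∈ D := by
    intro k
    induction k with
    | zero => simpa using hz₀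
    | succ n ih => rw [Function.iterate_succ_apply', ← hinv]; exact ⟨_, ih, rfl⟩
  obtain ⟨a, b, hab, heq⟩ := Finite.exists_ne_map_eq_of_infinite (fun k : ℕ => F^[k] z₀)
  have key : ∃ a b : ℕ, a < b ∧ F^[a] z₀ = F^[b] z₀ := by
    rcases hab.lt_or_gt with h | h
    · exact ⟨a, b, h, heq⟩
    · exact ⟨b, a, h, heq.symm⟩
  obtain ⟨a, b, hlt, heq2⟩ := key
  refine ⟨F^[a] z₀, b - a, by omega, ?_, hforward a, ?_⟩
  · rw [← Function.iterate_add_apply, show b - a + a = b by omega, ← heq2]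
  · have horb : IsAttractor F (Set.range fun k : ℕ => F^[k] (F^[a] z₀)) :=
      orbit_attractor F _ (b - a) (by omega)
        (by rw [← Function.iterate_add_apply, show b - a + a = b by omega, ← heq2])
    have hsub : (Set.range fun k : ℕ => F^[k] (F^[a] z₀)) ⊆ D := by
      rintro w ⟨k, rfl⟩
      show F^[k] (F^[a] z₀) ∈ D
      rw [← Function.iterate_add_apply]
      exact hforward _
    exact (hmin _ hsub horb.1 horb.2.1).symm

/-- **Corollary 3.5, steady-state upstream case.**
Let `F(x,y) = (F₁ x, H x y)` be decomposable and let
`C = {(c,d₁), …, (c,d_r)}` be an attractor of `F`, where `{c}` is a steady state of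
`F₁` and `C₂ = {d₁,…,d_r}` is an attractor of `F₂^c = H c ·`. If the controlled
upstream network `G₁` has unique attractor `{c}`, and the controlled downstream update
`H'` is such that `H' c ·` has unique attractor `C₂`, then the controlled network
`F^μ(x,y) = (G₁ x, H' x y)` has `C` as its unique attractor. -/
theorem stmt_2 (n₁ n₂ r : ℕ) (hr : 0 < r)
    (F₁ : (Fin n₁ → ZMod 2) → (Fin n₁ → ZMod 2))
    (H : (Fin n₁ → ZMod 2) → (Fin n₂ → ZMod 2) → (Fin n₂ → ZMod 2))
    (F : (Fin n₁ → ZMod 2) × (Fin n₂ → ZMod 2) → (Fin n₁ → ZMod 2) × (Fin n₂ → ZMod 2))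
    (hF : ∀ x y, F (x, y) = (F₁ x, H x y))
    (c : Fin n₁ → ZMod 2) (hc : F₁ c = c)
    (d : ZMod r → (Fin n₂ → ZMod 2))
    (hd_inj : Function.Injective d)
    (hd_step : ∀ i : ZMod r, H c (d i) = d (i + 1))
    (hd_att : IsAttractor (fun y => H c y) (Set.range d))
    (hC : IsAttractor F (Set.range fun i : ZMod r => (c, d i)))
    (G₁ : (Fin n₁ → ZMod 2) → (Fin n₁ → ZMod 2))
    (hG₁_att : IsAttractor G₁ {c})
    (hG₁_uniq : ∀ D, IsAttractor G₁ D → D = {c})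
    (H' : (Fin n₁ → ZMod 2) → (Fin n₂ → ZMod 2) → (Fin n₂ → ZMod 2))
    (hH'_att : IsAttractor (fun y => H' c y) (Set.range d))
    (hH'_uniq : ∀ D, IsAttractor (fun y => H' c y) D → D = Set.range d) :
    IsAttractor (fun z : (Fin n₁ → ZMod 2) × (Fin n₂ → ZMod 2) => (G₁ z.1, H' z.1 z.2))
      (Set.range fun i : ZMod r => (c, d i)) ∧
    ∀ D, IsAttractor (fun z : (Fin n₁ → ZMod 2) × (Fin n₂ → ZMod 2) => (G₁ z.1, H' z.1 z.2)) D →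
      D = Set.range fun i : ZMod r => (c, d i) := by
  set Fm := fun z : (Fin n₁ → ZMod 2) × (Fin n₂ → ZMod 2) => (G₁ z.1, H' z.1 z.2) with hFm
  -- G₁ fixes c
  have hG₁c : G₁ c = c := by
    have := hG₁_att.2.1
    have hc' : G₁ c ∈ G₁ '' ({c} : Set _) := ⟨c, rfl, rfl⟩
    rw [this] at hc'
    exact hc'
  have hiter : ∀ (k : ℕ) (y : Fin n₂ → ZMod 2),
      Fm^[k] (c, y) = (c, (fun y => H' c y)^[k] y) := by
    intro k
    induction k with
    | zero => intro y; rfl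
    | succ n ih =>
      intro y
      rw [Function.iterate_succ_apply', Function.iterate_succ_apply', ih]
      show (G₁ c, H' c _) = _
      rw [hG₁c]
  have hfst : ∀ (k : ℕ) (z : (Fin n₁ → ZMod 2) × (Fin n₂ → ZMod 2)),
      (Fm^[k] z).1 = G₁^[k] z.1 := by
    intro k
    induction k with
    | zero => intro z; rfl
    | succ n ih =>
      intro z
      rw [Function.iterate_succ_apply', Function.iterate_succ_apply', ← ih]
  constructor
  · refine ⟨⟨(c, d 0), 0, rfl⟩, ?_, ?_⟩
    · -- image equality
      ext w
      constructor
      · rintro ⟨_, ⟨i, rfl⟩, rfl⟩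
        show (G₁ c, H' c (d i)) ∈ _
        have : H' c (d i) ∈ (fun y => H' c y) '' Set.range d := ⟨d i, ⟨i, rfl⟩, rfl⟩
        rw [hH'_att.2.1] at this
        obtain ⟨j, hj⟩ := this
        exact ⟨j, by show (c, d j) = (G₁ c, H' c (d i)); rw [hG₁c, hj]⟩
      · rintro ⟨j, rfl⟩
        have : d j ∈ (fun y => H' c y) '' Set.range d := by
          rw [hH'_att.2.1]; exact ⟨j, rfl⟩
        obtain ⟨_, ⟨i, rfl⟩, hi⟩ := this
        exact ⟨(c, d i), ⟨i, rfl⟩, by show (G₁ c, H' c (d i)) = (c, d j); rw [hG₁c, show H' c (d i) = d j from hi]⟩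
    · -- minimality
      intro D hD hDne hDinv
      have hfst_c : ∀ z ∈ D, z.1 = c := by
        intro z hz
        obtain ⟨i, hi⟩ := hD hz
        rw [← hi]
      set D₂ : Set (Fin n₂ → ZMod 2) := {y | (c, y) ∈ D} with hD₂
      have hDeq : D = (fun y => ((c : Fin n₁ → ZMod 2), y)) '' D₂ := by
        ext z
        constructor
        · intro hz
          refine ⟨z.2, ?_, ?_⟩
          · show (c, z.2) ∈ D
            have := hfst_c z hz
            rwa [← this, Prod.mk.eta]
          · show ((c : Fin n₁ → ZMod 2), z.2) = z
            rw [← hfst_c z hz]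
        · rintro ⟨y, hy, rfl⟩; exact hy
      have hD₂sub : D₂ ⊆ Set.range d := by
        intro y hy
        obtain ⟨i, hi⟩ := hD hy
        exact ⟨i, congrArg Prod.snd hi⟩
      have hD₂ne : D₂.Nonempty := by
        obtain ⟨z, hz⟩ := hDne
        exact ⟨z.2, by show (c, z.2) ∈ D; rw [← hfst_c z hz, Prod.mk.eta]; exact hz⟩
      have hD₂inv : (fun y => H' c y) '' D₂ = D₂ := by
        ext y
        constructor
        · rintro ⟨y', hy', rfl⟩
          show (c, H' c y') ∈ D
          rw [← hDinv]
          exact ⟨(c, y'), hy', by show (G₁ c, H' c y') = _; rw [hG₁c]⟩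
        · intro hy
          have : (c, y) ∈ Fm '' D := by rw [hDinv]; exact hy
          obtain ⟨z, hz, hzeq⟩ := this
          have hz1 : z.1 = c := hfst_c z hz
          refine ⟨z.2, ?_, ?_⟩
          · show (c, z.2) ∈ D; rwa [← hz1, Prod.mk.eta]
          · have := congrArg Prod.snd hzeq
            simpa [hz1, hFm] using this
      have := hH'_att.2.2 D₂ hD₂sub hD₂ne hD₂inv
      rw [hDeq, this]
      ext z
      constructor
      · rintro ⟨_, ⟨i, rfl⟩, rfl⟩; exact ⟨i, rfl⟩
      · rintro ⟨i, rfl⟩; exact ⟨d i, ⟨i, rfl⟩, rfl⟩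
  · -- uniqueness
    intro D hDatt
    obtain ⟨z, p, hp, hz, hzD, hDeq⟩ := attractor_eq_orbit Fm D hDatt
    -- first coordinate of z is c
    have hG₁p : G₁^[p] z.1 = z.1 := by
      have := congrArg Prod.fst hz
      rwa [hfst] at this
    have horb1 := orbit_attractor G₁ z.1 p hp hG₁p
    have h1 := hG₁_uniq _ horb1
    have hz1 : z.1 = c := by
      have : z.1 ∈ Set.range fun k : ℕ => G₁^[k] z.1 := ⟨0, rfl⟩
      rw [h1] at this
      exact this
    -- second coordinate
    have hz' : Fm^[p] (c, z.2) = (c, z.2) := by rw [← hz1, Prod.mk.eta]; exact hz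
    rw [hiter] at hz'
    have hH'p : (fun y => H' c y)^[p] z.2 = z.2 := congrArg Prod.snd hz'
    have horb2 := orbit_attractor (fun y => H' c y) z.2 p hp hH'p
    have h2 := hH'_uniq _ horb2
    rw [hDeq]
    ext w
    constructor
    · rintro ⟨k, rfl⟩
      show Fm^[k] z ∈ _
      rw [← Prod.mk.eta (p := z), hz1, hiter]
      have : (fun y => H' c y)^[k] z.2 ∈ Set.range fun k : ℕ => (fun y => H' c y)^[k] z.2 :=
        ⟨k, rfl⟩
      rw [h2] at this
      obtain ⟨i, hi⟩ := this
      exact ⟨i, by show (c, d i) = _; rw [hi]⟩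
    · rintro ⟨i, rfl⟩
      have : d i ∈ Set.range fun k : ℕ => (fun y => H' c y)^[k] z.2 := by
        rw [h2]; exact ⟨i, rfl⟩
      obtain ⟨k, hk⟩ := this
      refine ⟨k, ?_⟩
      show Fm^[k] z = (c, d i)
      rw [← Prod.mk.eta (p := z), hz1, hiter, show (fun y => H' c y)^[k] z.2 = d i from hk]
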